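/- Let m ≥ 3 be an integer and let F be an LR-separated cellular automaton over ZMod m with leftmost position ℓ and rightmost position r satisfying ℓ < r, so the local rule is f(x_1,…,x_{d+1}) = a_ℓ x_ℓ^{q_ℓ} + π(x_{ℓ+1},…,x_{r−1}) + a_r x_r^{q_r} with a_ℓ, a_r ≠ 0 and q_ℓ, q_r ≥ 1. If F is permutive at position ℓ and permutive at position r, then F is not injective. -/
import Mathlib


/-- The global map of the cellular automaton over `ZMod m` with diameter `d`
and local rule `f : (ZMod m)^{d+1} → ZMod m`:
`F(x)_i = f(x_i, x_{i+1}, …, x_{i+d})`. -/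
def globalMap (m d : ℕ) (f : (Fin (d + 1) → ZMod m) → ZMod m)
    (x : ℤ → ZMod m) : ℤ → ZMod m :=
  fun i => f fun k => x (i + ((k : ℕ) : ℤ))

/-- The CA with local rule `f` is permutive at position `j` if, for every
choice of fixed values of the other `d` coordinates, the one-variable map
`a ↦ f(x_1,…,x_{j-1}, a, x_{j+1},…,x_{d+1})` is a bijection of `ZMod m`. -/
def PermutiveAt (m d : ℕ) (f : (Fin (d + 1) → ZMod m) → ZMod m)
    (j : Fin (d + 1)) : Prop :=
  ∀ x : Fin (d + 1) → ZMod m,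
    Function.Bijective fun a : ZMod m => f (Function.update x j a)

/-- Sliding-window map: shift left and append a newly computed value. -/
private def slide {α : Type*} {s : ℕ} (step : (Fin s → α) → α) (w : Fin s → α) :
    Fin s → α :=
  fun j => if hj : (j : ℕ) + 1 < s then w ⟨(j : ℕ) + 1, hj⟩ else step w

private lemma iterate_mul_period {β : Type*} (T : β → β) {N : ℕ} {x : β}
    (hx : T^[N] x = x) (q : ℕ) : T^[N * q] x = x := by
  induction q with
  | zero => simp
  | succ q ih => rw [Nat.mul_succ, Function.iterate_add_apply, hx, ih]

private lemma iterate_mod_period {β : Type*} (T : β → β) {N : ℕ} {x : β}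
    (hx : T^[N] x = x) (k : ℕ) : T^[k] x = T^[k % N] x := by
  conv_lhs => rw [← Nat.mod_add_div k N]
  rw [Function.iterate_add_apply, iterate_mul_period T hx]

private lemma iterate_exists_period {β : Type*} [Finite β] (T : β → β)
    (hT : Function.Injective T) (x : β) : ∃ N, 0 < N ∧ T^[N] x = x := by
  obtain ⟨a, b, hne, heq⟩ := Finite.exists_ne_map_eq_of_infinite (fun n : ℕ => T^[n] x)
  wlog hab : a < b generalizing a b
  · exact this b a hne.symm heq.symm (by omega)
  refine ⟨b - a, by omega, ?_⟩
  have h2 : T^[a] (T^[b - a] x) = T^[a] x := by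
    rw [← Function.iterate_add_apply]
    rw [show a + (b - a) = b from by omega]
    exact heq.symm
  exact (hT.iterate a) h2

/-- Let `m ≥ 3` and `F` an `LR`-separated CA over `ZMod m` with leftmost
position `ℓ` and rightmost position `r`, where `ℓ < r`, so the local rule is
`f(x) = aℓ * x_ℓ ^ qℓ + π(x_{ℓ+1},…,x_{r-1}) + ar * x_r ^ qr` with
`aℓ, ar ≠ 0` and `qℓ, qr ≥ 1`.  If `F` is permutive at position `ℓ` and at
position `r`, then `F` is not injective. -/
theorem LRseparated_bipermutive_not_injective
    (m : ℕ) (hm : 3 ≤ m) (d : ℕ)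
    (ℓ r : Fin (d + 1)) (hlr : ℓ < r)
    (aℓ ar : ZMod m) (haℓ : aℓ ≠ 0) (har : ar ≠ 0)
    (qℓ qr : ℕ) (hqℓ : 1 ≤ qℓ) (hqr : 1 ≤ qr)
    (π : ({i : Fin (d + 1) // ℓ < i ∧ i < r} → ZMod m) → ZMod m)
    (f : (Fin (d + 1) → ZMod m) → ZMod m)
    (hf : ∀ x, f x = aℓ * x ℓ ^ qℓ + π (fun i => x i.1) + ar * x r ^ qr)
    (hpermℓ : PermutiveAt m d f ℓ) (hpermr : PermutiveAt m d f r) :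
    ¬ Function.Injective (globalMap m d f) := by
  intro hinj
  haveI : NeZero m := ⟨by omega⟩
  haveI : Fact (1 < m) := ⟨by omega⟩
  have hm1 : (1 : ZMod m) ≠ 0 := one_ne_zero
  have hLR : (ℓ : ℕ) < (r : ℕ) := Fin.lt_def.mp hlr
  set s : ℕ := (r : ℕ) - (ℓ : ℕ) with hs_def
  have hs : 0 < s := by omega
  have hR : (r : ℕ) = (ℓ : ℕ) + s := by omega
  have hne_rℓ : r ≠ ℓ := hlr.ne'
  have hmid_ne_ℓ : ∀ i : {i : Fin (d + 1) // ℓ < i ∧ i < r}, i.1 ≠ ℓ := fun i => (i.2.1).ne'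
  have hmid_ne_r : ∀ i : {i : Fin (d + 1) // ℓ < i ∧ i < r}, i.1 ≠ r := fun i => (i.2.2).ne
  set g : ZMod m → ZMod m := fun a => aℓ * a ^ qℓ with hgdef
  set h : ZMod m → ZMod m := fun a => ar * a ^ qr with hhdef
  -- g is bijective
  have hCπ : (fun a : ZMod m => f (Function.update (fun _ => (0 : ZMod m)) ℓ a))
      = fun a => g a + π (fun _ => 0) := by
    funext a
    rw [hf, Function.update_self, Function.update_of_ne hne_rℓ]
    have hπa : (fun i : {i : Fin (d + 1) // ℓ < i ∧ i < r} =>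
        Function.update (fun _ => (0 : ZMod m)) ℓ a i.1) = fun _ => 0 :=
      funext fun i => Function.update_of_ne (hmid_ne_ℓ i) _ _
    rw [hπa]
    simp [hgdef, zero_pow (show qr ≠ 0 by omega)]
  have hgb : Function.Bijective g := by
    have h1 := hpermℓ (fun _ => 0)
    rw [hCπ] at h1
    constructor
    · intro a b hab
      have h2 : g a + π (fun _ => 0) = g b + π (fun _ => 0) := by rw [hab]
      exact h1.1 h2
    · intro y
      obtain ⟨a, ha⟩ := h1.2 (y + π (fun _ => 0))
      have ha' : g a + π (fun _ => 0) = y + π (fun _ => 0) := ha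
      exact ⟨a, add_right_cancel ha'⟩
  -- h is bijective
  have hCπr : (fun a : ZMod m => f (Function.update (fun _ => (0 : ZMod m)) r a))
      = fun a => h a + π (fun _ => 0) := by
    funext a
    rw [hf, Function.update_self, Function.update_of_ne hlr.ne]
    have hπa : (fun i : {i : Fin (d + 1) // ℓ < i ∧ i < r} =>
        Function.update (fun _ => (0 : ZMod m)) r a i.1) = fun _ => 0 :=
      funext fun i => Function.update_of_ne (hmid_ne_r i) _ _
    rw [hπa]
    simp [hhdef, zero_pow (show qℓ ≠ 0 by omega)]
    ring
  have hhb : Function.Bijective h := by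
    have h1 := hpermr (fun _ => 0)
    rw [hCπr] at h1
    constructor
    · intro a b hab
      have h2 : h a + π (fun _ => 0) = h b + π (fun _ => 0) := by rw [hab]
      exact h1.1 h2
    · intro y
      obtain ⟨a, ha⟩ := h1.2 (y + π (fun _ => 0))
      have ha' : h a + π (fun _ => 0) = y + π (fun _ => 0) := ha
      exact ⟨a, add_right_cancel ha'⟩
  set Hinv : ZMod m → ZMod m := Function.surjInv hhb.2 with hHinvdef
  have hHinv : ∀ y, h (Hinv y) = y := fun y => Function.surjInv_eq hhb.2 y
  set c0 : ZMod m := f (fun _ => 0) with hc0def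
  set πmid : (Fin s → ZMod m) → ZMod m := fun w => π (fun k =>
    w ⟨(k.1 : ℕ) - (ℓ : ℕ), by
      have h1 : (k.1 : ℕ) < (r : ℕ) := Fin.lt_def.mp k.2.2
      omega⟩) with hπmiddef
  set step : (Fin s → ZMod m) → ZMod m :=
    fun w => Hinv (c0 - (g (w ⟨0, hs⟩) + πmid w)) with hstepdef
  -- the sliding map is injective
  have hTinj : Function.Injective (slide step) := by
    intro v w hvw
    have htail : ∀ j : Fin s, (j : ℕ) ≠ 0 → v j = w j := by
      intro j hj0
      have hjlt : (j : ℕ) - 1 + 1 < s := by omega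
      have h2 := congrFun hvw ⟨(j : ℕ) - 1, by omega⟩
      simp only [slide] at h2
      rw [dif_pos hjlt, dif_pos hjlt] at h2
      have hj3 : (⟨(j : ℕ) - 1 + 1, hjlt⟩ : Fin s) = j :=
        Fin.ext (by omega : (j : ℕ) - 1 + 1 = (j : ℕ))
      rwa [hj3] at h2
    have hmid : πmid v = πmid w := by
      simp only [hπmiddef]
      congr 1
      funext k
      have hk1 : (ℓ : ℕ) < (k.1 : ℕ) := Fin.lt_def.mp k.2.1
      exact htail _ (by show (k.1 : ℕ) - (ℓ : ℕ) ≠ 0; omega)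
    have hlast := congrFun hvw ⟨s - 1, by omega⟩
    simp only [slide] at hlast
    rw [dif_neg (by show ¬(s - 1 + 1 < s); omega),
        dif_neg (by show ¬(s - 1 + 1 < s); omega)] at hlast
    simp only [hstepdef] at hlast
    have h7 := congrArg h hlast
    rw [hHinv, hHinv] at h7
    have hgeq : g (v ⟨0, hs⟩) = g (w ⟨0, hs⟩) := by linear_combination -h7 - hmid
    funext j
    by_cases hj0 : (j : ℕ) = 0
    · have hj : j = ⟨0, hs⟩ := Fin.ext hj0
      rw [hj]
      exact hgb.1 hgeq
    · exact htail j hj0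
  -- main construction : for any window, a configuration with constant image
  have key : ∀ W : Fin s → ZMod m, ∃ x' : ℤ → ZMod m,
      x' 0 = W ⟨0, hs⟩ ∧ ∀ i, globalMap m d f x' i = c0 := by
    intro W
    obtain ⟨N, hN, hNW⟩ := iterate_exists_period (slide step) hTinj W
    set V : ℤ → (Fin s → ZMod m) :=
      fun p => (slide step)^[(p % (N : ℤ)).toNat] W with hVdef
    have hV1 : ∀ p : ℤ, V (p + 1) = slide step (V p) := by
      intro p
      have hNz : ((N : ℤ)) ≠ 0 := by exact_mod_cast hN.ne'
      have h0 : (0 : ℤ) ≤ p % (N : ℤ) := Int.emod_nonneg p hNz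
      have htc : (((p % (N : ℤ)).toNat : ℤ)) = p % (N : ℤ) := Int.toNat_of_nonneg h0
      have hsplit : p + 1 = (p % (N : ℤ) + 1) + (N : ℤ) * (p / (N : ℤ)) := by
        have := Int.emod_add_mul_ediv p (N : ℤ); linarith
      have hp1 : (p + 1) % (N : ℤ) = (((p % (N : ℤ)).toNat + 1 : ℕ) : ℤ) % (N : ℤ) := by
        rw [hsplit, Int.add_mul_emod_self_left]
        push_cast [htc]
        ring_nf
      have hp2 : ((p + 1) % (N : ℤ)).toNat = ((p % (N : ℤ)).toNat + 1) % N := by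
        rw [hp1, ← Int.natCast_mod, Int.toNat_natCast]
      simp only [hVdef]
      rw [hp2, ← Function.iterate_succ_apply' (slide step)]
      exact (iterate_mod_period (slide step) hNW ((p % (N : ℤ)).toNat + 1)).symm
    set x' : ℤ → ZMod m := fun z => V z ⟨0, hs⟩ with hx'def
    have hwin : ∀ (j : ℕ) (hj : j < s) (p : ℤ), V p ⟨j, hj⟩ = x' (p + (j : ℤ)) := by
      intro j
      induction j with
      | zero =>
        intro hj p
        simp [hx'def]
      | succ j ih =>
        intro hj p
        have hj' : j < s := by omega
        have h1 : slide step (V p) ⟨j, hj'⟩ = V p ⟨j + 1, hj⟩ := by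
          simp only [slide]
          exact dif_pos hj
        rw [← h1, ← hV1 p, ih hj' (p + 1)]
        congr 1
        push_cast
        ring
    have hwinF : ∀ (p : ℤ) (j : Fin s), V p j = x' (p + ((j : ℕ) : ℤ)) :=
      fun p j => hwin (j : ℕ) j.2 p
    have hx'0 : x' 0 = W ⟨0, hs⟩ := by
      simp [hx'def, hVdef]
    refine ⟨x', hx'0, ?_⟩
    intro i
    simp only [globalMap, hf]
    set p : ℤ := i + ((ℓ : ℕ) : ℤ) with hp
    have e1 : x' p = V p ⟨0, hs⟩ := by
      rw [hwinF p ⟨0, hs⟩]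
      congr 1
      show p = p + ((0 : ℕ) : ℤ)
      simp
    have eπ : π (fun k : {i : Fin (d + 1) // ℓ < i ∧ i < r} => x' (i + ((k.1 : ℕ) : ℤ)))
        = πmid (V p) := by
      simp only [hπmiddef]
      congr 1
      funext k
      have hk1 : (ℓ : ℕ) < (k.1 : ℕ) := Fin.lt_def.mp k.2.1
      rw [hwinF p]
      congr 1
      show i + ((k.1 : ℕ) : ℤ) = p + ((((k.1 : ℕ) - (ℓ : ℕ) : ℕ)) : ℤ)
      omega
    have e3 : x' (i + ((r : ℕ) : ℤ)) = step (V p) := by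
      have h1 : x' (i + ((r : ℕ) : ℤ)) = V (p + 1) ⟨s - 1, by omega⟩ := by
        rw [hwinF (p + 1) ⟨s - 1, by omega⟩]
        congr 1
        show i + ((r : ℕ) : ℤ) = p + 1 + (((s - 1 : ℕ)) : ℤ)
        omega
      rw [h1, hV1 p]
      simp only [slide]
      rw [dif_neg (by show ¬(s - 1 + 1 < s); omega)]
    rw [e1, eπ, e3]
    have h5 := hHinv (c0 - (g (V p ⟨0, hs⟩) + πmid (V p)))
    simp only [hstepdef, hgdef, hhdef] at h5 ⊢
    linear_combination h5
  obtain ⟨x0, hx00, hF0⟩ := key (fun _ => 0)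
  obtain ⟨x1, hx10, hF1⟩ := key (fun j => if (j : ℕ) = 0 then 1 else 0)
  have hFeq : globalMap m d f x0 = globalMap m d f x1 :=
    funext fun i => (hF0 i).trans (hF1 i).symm
  have hx01 : x0 = x1 := hinj hFeq
  have h0 : x0 0 = 0 := hx00
  have h1 : x1 0 = 1 := by simpa using hx10
  exact hm1 (by rw [← h1, ← hx01, h0])
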